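/- (LP lower bound via minimum-cost matching.) Let Q be the polytope of pairs (y, t) ∈ ℝ^E × ℝ^m satisfying constraints (C1), (C2), (C3') and 0 ≤ y_e ≤ 1, 0 ≤ t_j ≤ 1 (i.e., the feasible region P(w) with the covering constraint (C3) removed; Q does not depend on w). Fix a cost vector c : Fin m → ℚ with c_j ≥ 0 for all j. If Q is nonempty, then there exists (y°, t°) ∈ Q with all coordinates in {0,1} minimizing Σ_j c_j t_j over Q; moreover, for every 0-1 matrix w with r rows and m columns, the minimum value of Σ_j c_j t_j over Q is less than or equal to Σ_j c_j t_j for every (y, t) ∈ P(w). (Hence the optimal value c*_LP of the LP relaxation P₁^LP is at least the minimum cost c*_mat of input vertices matched in a maximum matching of B(A,B).) -/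

import Mathlib

open Finset in
/-- The feasible region `P(w)` of the LP relaxation `P₁^LP`: pairs `(y, t)` satisfying
(C1) `∑_{e : ℓ e = v} y_e = 1` for all left vertices `v`,
(C2) `∑_{e : ρ e = u} y_e ≤ 1` for all right vertices `u`,
(C3) `∑_j w_{i j} t_j ≥ 1` for all source-SCCs `i`,
(C3') `t_j ≥ ∑_{e : ρ e = inr j} y_e` for all inputs `j`,
and the box constraints `0 ≤ y ≤ 1`, `0 ≤ t ≤ 1`. -/
def Pw {n m r : ℕ} {V E : Type*} [Fintype E] [DecidableEq V]
    (ℓ : E → Fin n) (ρ : E → V ⊕ Fin m) (w : Matrix (Fin r) (Fin m) ℝ) :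
    Set ((E → ℝ) × (Fin m → ℝ)) :=
  { yt | (∀ v : Fin n, ∑ e : E, (if ℓ e = v then yt.1 e else 0) = 1) ∧
         (∀ u : V ⊕ Fin m, ∑ e : E, (if ρ e = u then yt.1 e else 0) ≤ 1) ∧
         (∀ i : Fin r, 1 ≤ ∑ j : Fin m, w i j * yt.2 j) ∧
         (∀ j : Fin m, (∑ e : E, (if ρ e = Sum.inr j then yt.1 e else 0)) ≤ yt.2 j) ∧
         (∀ e : E, 0 ≤ yt.1 e ∧ yt.1 e ≤ 1) ∧
         (∀ j : Fin m, 0 ≤ yt.2 j ∧ yt.2 j ≤ 1) }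

/-- The feasible region `P_k(w)` of the cardinality-constrained LP relaxation `P₂^LP`:
`P(w)` intersected with `{(y, t) : ∑_j t_j ≤ k}`. -/
def Pk {n m r : ℕ} {V E : Type*} [Fintype E] [DecidableEq V]
    (ℓ : E → Fin n) (ρ : E → V ⊕ Fin m) (w : Matrix (Fin r) (Fin m) ℝ) (k : ℕ) :
    Set ((E → ℝ) × (Fin m → ℝ)) :=
  Pw ℓ ρ w ∩ { yt | ∑ j : Fin m, yt.2 j ≤ (k : ℝ) }

/-- The polytope `Q`: the feasible region `P(w)` with the covering constraint (C3) removed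
(it does not depend on `w`). -/
def Qset {n m : ℕ} {V E : Type*} [Fintype E] [DecidableEq V]
    (ℓ : E → Fin n) (ρ : E → V ⊕ Fin m) : Set ((E → ℝ) × (Fin m → ℝ)) :=
  { yt | (∀ v : Fin n, ∑ e : E, (if ℓ e = v then yt.1 e else 0) = 1) ∧
         (∀ u : V ⊕ Fin m, ∑ e : E, (if ρ e = u then yt.1 e else 0) ≤ 1) ∧
         (∀ j : Fin m, (∑ e : E, (if ρ e = Sum.inr j then yt.1 e else 0)) ≤ yt.2 j) ∧
         (∀ e : E, 0 ≤ yt.1 e ∧ yt.1 e ≤ 1) ∧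
         (∀ j : Fin m, 0 ≤ yt.2 j ∧ yt.2 j ≤ 1) }

open Finset in
lemma aux_indicator_card {E : Type*} [Fintype E] (p : E → Prop) [DecidablePred p]
    (hp : ∀ e e', p e → p e' → e = e') :
    (∑ e : E, if p e then (1:ℝ) else 0) = 0 ∨ (∑ e : E, if p e then (1:ℝ) else 0) = 1 := by
  rw [Finset.sum_boole]
  have h : (Finset.univ.filter p).card ≤ 1 := Finset.card_le_one.2 (by
    intro a ha b hb
    exact hp a b (Finset.mem_filter.1 ha).2 (Finset.mem_filter.1 hb).2)
  rcases Nat.le_one_iff_eq_zero_or_eq_one.1 h with h | h <;> simp [h]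

open Finset in
lemma aux_rounding {n m : ℕ} {V E : Type*} [Fintype V] [Fintype E]
    [DecidableEq V] (ℓ : E → Fin n) (ρ : E → V ⊕ Fin m)
    (hinj : Function.Injective fun e : E => (ℓ e, ρ e))
    (c : Fin m → ℚ) (hc : ∀ j, 0 ≤ c j)
    {yt : (E → ℝ) × (Fin m → ℝ)} (hyt : yt ∈ Qset ℓ ρ) :
    ∃ yt' ∈ Qset ℓ ρ, (∀ e, yt'.1 e = 0 ∨ yt'.1 e = 1) ∧
      (∀ j, yt'.2 j = 0 ∨ yt'.2 j = 1) ∧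
      ∑ j : Fin m, (c j : ℝ) * yt'.2 j ≤ ∑ j : Fin m, (c j : ℝ) * yt.2 j := by
  classical
  obtain ⟨hC1, hC2, hC3, hbox, htbox⟩ := hyt
  set y : E → ℝ := yt.1 with hy
  set t : Fin m → ℝ := yt.2 with ht
  set s : V ⊕ Fin m → ℝ := fun u => ∑ e : E, if ρ e = u then y e else 0 with hsdef
  have hs0 : ∀ u, 0 ≤ s u := fun u =>
    Finset.sum_nonneg fun e _ => by by_cases h : ρ e = u <;> simp [h, (hbox e).1]
  have hs1 : ∀ u, s u ≤ 1 := hC2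
  -- sum swap: ∑ v ∑ e [ℓe=v ∧ ρe=u] y = s u
  have hswap : ∀ u : V ⊕ Fin m,
      (∑ v : Fin n, ∑ e : E, if ℓ e = v ∧ ρ e = u then y e else 0) = s u := by
    intro u
    rw [Finset.sum_comm]
    refine Finset.sum_congr rfl fun e _ => ?_
    by_cases h : ρ e = u
    · simp [h, Finset.sum_ite_eq]
    · simp [h]
  -- row version: ∑ u ∑ e [ℓe=v ∧ ρe=u] y = ∑ e [ℓe=v] y
  have hswap2 : ∀ v : Fin n,
      (∑ u : V ⊕ Fin m, ∑ e : E, if ℓ e = v ∧ ρ e = u then y e else 0)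
        = ∑ e : E, if ℓ e = v then y e else 0 := by
    intro v
    rw [Finset.sum_comm]
    refine Finset.sum_congr rfl fun e _ => ?_
    by_cases h : ℓ e = v
    · simp [h, Finset.sum_ite_eq]
    · simp [h]
  have hstot : (∑ u : V ⊕ Fin m, s u) = n := by
    have h1 : (∑ u : V ⊕ Fin m, s u) = ∑ e : E, y e := by
      rw [Finset.sum_comm]
      refine Finset.sum_congr rfl fun e _ => ?_
      simp [hsdef, Finset.sum_ite_eq]
    have h2 : (∑ e : E, y e) = ∑ v : Fin n, ∑ e : E, if ℓ e = v then y e else 0 := by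
      rw [Finset.sum_comm]
      refine Finset.sum_congr rfl fun e _ => ?_
      simp [Finset.sum_ite_eq]
    rw [h1, h2]
    simp [hC1]
  set ι := Fin n ⊕ (V ⊕ Fin m) with hι
  set M : Matrix ι ι ℝ := fun a b =>
    match a, b with
    | Sum.inl _, Sum.inl _ => 0
    | Sum.inl v, Sum.inr u => ∑ e : E, if ℓ e = v ∧ ρ e = u then y e else 0
    | Sum.inr u, Sum.inl _ => s u / n
    | Sum.inr u, Sum.inr u' => if u = u' then 1 - s u else 0
    with hM
  have hMds : M ∈ doublyStochastic ℝ ι := by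
    rw [mem_doublyStochastic_iff_sum]
    refine ⟨?_, ?_, ?_⟩
    · rintro (v | u) (v' | u')
      · exact le_refl 0
      · exact Finset.sum_nonneg fun e _ => by
          by_cases h : ℓ e = v ∧ ρ e = u' <;> simp [h, (hbox e).1]
      · exact div_nonneg (hs0 u) (Nat.cast_nonneg n)
      · show 0 ≤ if u = u' then 1 - s u else 0
        by_cases h : u = u'
        · rw [if_pos h]; exact sub_nonneg.2 (hs1 u)
        · rw [if_neg h]
    · rintro (v | u)
      · rw [Fintype.sum_sum_type]
        have e1 : (∑ v' : Fin n, M (Sum.inl v) (Sum.inl v')) = 0 := by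
          simp [hM]
        have e2 : (∑ u : V ⊕ Fin m, M (Sum.inl v) (Sum.inr u)) = 1 := by
          show (∑ u : V ⊕ Fin m, ∑ e : E, if ℓ e = v ∧ ρ e = u then y e else 0) = 1
          rw [hswap2 v, hC1 v]
        rw [e1, e2]; ring
      · rw [Fintype.sum_sum_type]
        have e2 : (∑ u' : V ⊕ Fin m, M (Sum.inr u) (Sum.inr u')) = 1 - s u := by
          show (∑ u' : V ⊕ Fin m, if u = u' then 1 - s u else 0) = 1 - s u
          rw [Finset.sum_ite_eq univ u (fun _ => 1 - s u)]; simp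
        have e1 : (∑ v : Fin n, M (Sum.inr u) (Sum.inl v)) = s u := by
          show (∑ _v : Fin n, s u / (n:ℝ)) = s u
          rcases Nat.eq_zero_or_pos n with hn | hn
          · have hsu : s u = 0 := Finset.sum_eq_zero fun e _ =>
              absurd (ℓ e).pos (by omega)
            subst hn; simp [hsu]
          · have hn' : (n : ℝ) ≠ 0 := Nat.cast_ne_zero.2 (by omega)
            rw [Finset.sum_const, Finset.card_univ, Fintype.card_fin, nsmul_eq_mul]
            field_simp
        rw [e1, e2]; ring
    · rintro (v | u')
      · rw [Fintype.sum_sum_type]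
        have hn : 0 < n := v.pos
        have hn' : (n : ℝ) ≠ 0 := Nat.cast_ne_zero.2 (by omega)
        have e1 : (∑ v' : Fin n, M (Sum.inl v') (Sum.inl v)) = 0 := by simp [hM]
        have e2 : (∑ u : V ⊕ Fin m, M (Sum.inr u) (Sum.inl v)) = 1 := by
          show (∑ u : V ⊕ Fin m, s u / (n:ℝ)) = 1
          rw [← Finset.sum_div, hstot]
          field_simp
        rw [e1, e2]; ring
      · rw [Fintype.sum_sum_type]
        have e1 : (∑ v : Fin n, M (Sum.inl v) (Sum.inr u')) = s u' := hswap u'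
        have e2 : (∑ u : V ⊕ Fin m, M (Sum.inr u) (Sum.inr u')) = 1 - s u' := by
          show (∑ u : V ⊕ Fin m, if u = u' then 1 - s u else 0) = 1 - s u'
          rw [Finset.sum_ite_eq' univ u' (fun u => 1 - s u)]; simp
        rw [e1, e2]; ring
  obtain ⟨w, hw0, hw1, hwM⟩ := exists_eq_sum_perm_of_mem_doublyStochastic hMds
  have hPapp : ∀ (σ : Equiv.Perm ι) (a b : ι),
      σ.permMatrix ℝ a b = if σ a = b then 1 else 0 := by
    intro σ a b
    simp [Equiv.Perm.permMatrix, PEquiv.toMatrix_apply, Equiv.toPEquiv_apply, Option.mem_def]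
  have hMentry : ∀ a b : ι, M a b = ∑ σ : Equiv.Perm ι, w σ * σ.permMatrix ℝ a b := by
    intro a b
    conv_lhs => rw [← hwM]
    simp [Finset.sum_apply, Matrix.sum_apply]
  -- lower bound on entries
  have hMge : ∀ (σ : Equiv.Perm ι) (a b : ι), σ a = b → w σ ≤ M a b := by
    intro σ a b hab
    rw [hMentry a b]
    have : w σ * σ.permMatrix ℝ a b = w σ := by rw [hPapp, if_pos hab, mul_one]
    calc w σ = w σ * σ.permMatrix ℝ a b := this.symm
      _ ≤ ∑ σ' : Equiv.Perm ι, w σ' * σ'.permMatrix ℝ a b := by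
          exact Finset.single_le_sum (f := fun σ' => w σ' * σ'.permMatrix ℝ a b)
            (fun σ' _ => mul_nonneg (hw0 σ')
              (by rw [hPapp]; split <;> norm_num)) (Finset.mem_univ σ)
  -- the objective as a linear map on matrices
  set L : Matrix ι ι ℝ →ₗ[ℝ] ℝ :=
    ∑ j : Fin m, ∑ v : Fin n,
      (c j : ℝ) • Matrix.entryLinearMap ℝ ℝ (Sum.inl v) (Sum.inr (Sum.inr j)) with hL
  have hLapp : ∀ A : Matrix ι ι ℝ,
      L A = ∑ j : Fin m, (c j : ℝ) * ∑ v : Fin n, A (Sum.inl v) (Sum.inr (Sum.inr j)) := by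
    intro A
    simp [hL, LinearMap.sum_apply, Matrix.entryLinearMap, Finset.mul_sum]
    rfl
  have hLdecomp : L M = ∑ σ : Equiv.Perm ι, w σ * L (σ.permMatrix ℝ) := by
    rw [← hwM, map_sum]
    refine Finset.sum_congr rfl fun σ _ => ?_
    rw [LinearMap.map_smul, smul_eq_mul]
  -- pick the cheapest permutation with positive weight
  have hS : (Finset.univ.filter fun σ : Equiv.Perm ι => 0 < w σ).Nonempty := by
    by_contra h
    rw [Finset.not_nonempty_iff_eq_empty] at h
    have hz : ∑ σ : Equiv.Perm ι, w σ = 0 := Finset.sum_eq_zero fun σ _ => by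
      by_contra hσ
      have h1 : 0 < w σ := lt_of_le_of_ne (hw0 σ) (Ne.symm hσ)
      have h2 : σ ∈ Finset.univ.filter fun σ => 0 < w σ :=
        Finset.mem_filter.2 ⟨Finset.mem_univ σ, h1⟩
      simp [h] at h2
    rw [hw1] at hz; norm_num at hz
  obtain ⟨σ₀, hσ₀S, hσ₀min⟩ := Finset.exists_min_image _ (fun σ => L (σ.permMatrix ℝ)) hS
  have hwσ₀ : 0 < w σ₀ := (Finset.mem_filter.1 hσ₀S).2
  have hLP_le : L (σ₀.permMatrix ℝ) ≤ L M := by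
    rw [hLdecomp]
    calc L (σ₀.permMatrix ℝ) = ∑ σ : Equiv.Perm ι, w σ * L (σ₀.permMatrix ℝ) := by
          rw [← Finset.sum_mul, hw1, one_mul]
      _ ≤ ∑ σ : Equiv.Perm ι, w σ * L (σ.permMatrix ℝ) := by
          refine Finset.sum_le_sum fun σ _ => ?_
          rcases eq_or_lt_of_le (hw0 σ) with h | h
          · rw [← h]; simp
          · exact mul_le_mul_of_nonneg_left
              (hσ₀min σ (Finset.mem_filter.2 ⟨Finset.mem_univ σ, h⟩)) (le_of_lt h)
  -- the 0-1 solution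
  set y' : E → ℝ := fun e => if σ₀ (Sum.inl (ℓ e)) = Sum.inr (ρ e) then 1 else 0 with hy'
  set t' : Fin m → ℝ := fun j => ∑ e : E, if ρ e = Sum.inr j then y' e else 0 with ht'
  have hC1' : ∀ v : Fin n, (∑ e : E, if ℓ e = v then y' e else 0) = 1 := by
    intro v
    have hpos : 0 < M (Sum.inl v) (σ₀ (Sum.inl v)) := lt_of_lt_of_le hwσ₀ (hMge σ₀ _ _ rfl)
    obtain ⟨u, hu⟩ : ∃ u, σ₀ (Sum.inl v) = Sum.inr u := by
      rcases h : σ₀ (Sum.inl v) with v' | u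
      · rw [h] at hpos
        have h0 : M (Sum.inl v) (Sum.inl v') = 0 := rfl
        rw [h0] at hpos; norm_num at hpos
      · exact ⟨u, rfl⟩
    rw [hu] at hpos
    have hpos' : 0 < ∑ e : E, if ℓ e = v ∧ ρ e = u then y e else 0 := hpos
    obtain ⟨e₀, he₀⟩ : ∃ e₀ : E, ℓ e₀ = v ∧ ρ e₀ = u := by
      by_contra h
      push_neg at h
      have hz : (∑ e : E, if ℓ e = v ∧ ρ e = u then y e else 0) = 0 :=
        Finset.sum_eq_zero fun e _ => by
          rw [if_neg]; rintro ⟨h1, h2⟩; exact h e h1 h2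
      rw [hz] at hpos'; norm_num at hpos'
    have hterm : ∀ e : E, (if ℓ e = v then y' e else 0) = if e = e₀ then 1 else 0 := by
      intro e
      by_cases h1 : e = e₀
      · subst h1
        rw [if_pos he₀.1, if_pos rfl, hy']
        simp only
        rw [if_pos (by rw [he₀.1, he₀.2, hu])]
      · rw [if_neg h1]
        by_cases h2 : ℓ e = v
        · rw [if_pos h2, hy']
          simp only
          rw [if_neg]
          intro hh
          rw [h2, hu] at hh
          have hρ : ρ e = u := (Sum.inr.inj hh).symm
          exact h1 (hinj (show ((ℓ e, ρ e) : Fin n × (V ⊕ Fin m)) = (ℓ e₀, ρ e₀) by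
            rw [h2, hρ, he₀.1, he₀.2]))
        · rw [if_neg h2]
    rw [Finset.sum_congr rfl fun e _ => hterm e, Finset.sum_ite_eq' Finset.univ e₀ fun _ => (1:ℝ)]
    simp
  have hsub : ∀ u : V ⊕ Fin m, ∀ e e' : E,
      (ρ e = u ∧ σ₀ (Sum.inl (ℓ e)) = Sum.inr (ρ e)) →
      (ρ e' = u ∧ σ₀ (Sum.inl (ℓ e')) = Sum.inr (ρ e')) → e = e' := by
    rintro u e e' ⟨h1, h2⟩ ⟨h3, h4⟩
    have hσ : (Sum.inl (ℓ e) : ι) = Sum.inl (ℓ e') :=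
      σ₀.injective (by rw [h2, h4, h1, h3])
    have hl : ℓ e = ℓ e' := Sum.inl.inj hσ
    exact hinj (show ((ℓ e, ρ e) : Fin n × (V ⊕ Fin m)) = (ℓ e', ρ e') by
      rw [hl, h1, h3])
  have hindic : ∀ u : V ⊕ Fin m, (∑ e : E, if ρ e = u then y' e else 0)
      = ∑ e : E, if ρ e = u ∧ σ₀ (Sum.inl (ℓ e)) = Sum.inr (ρ e) then (1:ℝ) else 0 := by
    intro u
    refine Finset.sum_congr rfl fun e _ => ?_
    by_cases h1 : ρ e = u
    · by_cases h2 : σ₀ (Sum.inl (ℓ e)) = Sum.inr (ρ e) <;> simp [hy', h1, h2]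
    · simp [h1]
  have hC2' : ∀ u : V ⊕ Fin m, (∑ e : E, if ρ e = u then y' e else 0) = 0 ∨
      (∑ e : E, if ρ e = u then y' e else 0) = 1 := fun u => by
    rw [hindic u]; exact aux_indicator_card _ (hsub u)
  have hcost1 : ∑ j : Fin m, (c j : ℝ) * t' j ≤ L (σ₀.permMatrix ℝ) := by
    rw [hLapp]
    refine Finset.sum_le_sum fun j _ => ?_
    refine mul_le_mul_of_nonneg_left ?_ (by exact_mod_cast hc j)
    rw [ht']
    simp only
    rw [hindic (Sum.inr j)]
    have hrhs : (∑ v : Fin n, σ₀.permMatrix ℝ (Sum.inl v) (Sum.inr (Sum.inr j)))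
        = ∑ v : Fin n, if σ₀ (Sum.inl v) = Sum.inr (Sum.inr j) then (1:ℝ) else 0 :=
      Finset.sum_congr rfl fun v _ => hPapp σ₀ _ _
    rw [hrhs, Finset.sum_boole, Finset.sum_boole]
    apply Nat.cast_le.2
    refine Finset.card_le_card_of_injOn (fun e => ℓ e) ?_ ?_
    · intro e he
      simp only [Finset.coe_filter, Finset.coe_univ, Set.mem_univ, Finset.mem_coe, Set.mem_setOf_eq, Finset.mem_filter, Finset.mem_univ, true_and] at he ⊢
      rw [he.2, he.1]
    · intro e he e' he' hee
      simp only [Finset.coe_filter, Set.mem_setOf_eq, Finset.mem_univ, true_and] at he he'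
      exact hinj (show ((ℓ e, ρ e) : Fin n × (V ⊕ Fin m)) = (ℓ e', ρ e') from
        Prod.ext hee (he.1.trans he'.1.symm))
  have hcost2 : L M ≤ ∑ j : Fin m, (c j : ℝ) * t j := by
    rw [hLapp]
    refine Finset.sum_le_sum fun j _ => ?_
    refine mul_le_mul_of_nonneg_left ?_ (by exact_mod_cast hc j)
    have hh : (∑ v : Fin n, M (Sum.inl v) (Sum.inr (Sum.inr j))) = s (Sum.inr j) :=
      hswap (Sum.inr j)
    rw [hh]
    exact hC3 j
  refine ⟨(y', t'), ⟨hC1', ?_, fun j => le_refl _, fun e => ?_, fun j => ?_⟩, ?_, ?_, ?_⟩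
  · intro u
    rcases hC2' u with h | h <;> rw [h] <;> norm_num
  · constructor <;> (rw [hy']; simp only; split <;> norm_num)
  · rcases hC2' (Sum.inr j) with h | h <;> rw [ht'] <;> simp only <;> rw [h] <;> norm_num
  · intro e
    rw [hy']; simp only; split <;> simp
  · intro j
    exact hC2' (Sum.inr j)
  · exact hcost1.trans (hLP_le.trans hcost2)

theorem LP_lowerBound_via_matching' {n m : ℕ} (r : ℕ) {V E : Type*} [Fintype V] [Fintype E]
    [DecidableEq V] (ℓ : E → Fin n) (ρ : E → V ⊕ Fin m)
    (hinj : Function.Injective fun e : E => (ℓ e, ρ e))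
    (c : Fin m → ℚ) (hc : ∀ j, 0 ≤ c j)
    (hne : (Qset ℓ ρ).Nonempty) :
    ∃ yt ∈ Qset ℓ ρ,
      (∀ e : E, yt.1 e = 0 ∨ yt.1 e = 1) ∧ (∀ j : Fin m, yt.2 j = 0 ∨ yt.2 j = 1) ∧
      (∀ zt ∈ Qset ℓ ρ, ∑ j : Fin m, (c j : ℝ) * yt.2 j ≤ ∑ j : Fin m, (c j : ℝ) * zt.2 j) := by
  classical
  set φ : (E → Bool) × (Fin m → Bool) → (E → ℝ) × (Fin m → ℝ) :=
    fun f => (fun e => if f.1 e then 1 else 0, fun j => if f.2 j then 1 else 0) with hφ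
  set S : Finset ((E → Bool) × (Fin m → Bool)) :=
    Finset.univ.filter (fun f => φ f ∈ Qset ℓ ρ) with hSdef
  have key : ∀ zt ∈ Qset ℓ ρ, ∃ f ∈ S,
      ∑ j : Fin m, (c j : ℝ) * (φ f).2 j ≤ ∑ j : Fin m, (c j : ℝ) * zt.2 j := by
    intro zt hzt
    obtain ⟨yt', hyt'Q, h01y, h01t, hcost⟩ := aux_rounding ℓ ρ hinj c hc hzt
    refine ⟨(fun e => decide (yt'.1 e = 1), fun j => decide (yt'.2 j = 1)), ?_, ?_⟩
    all_goals {
      have hφf : φ (fun e => decide (yt'.1 e = 1), fun j => decide (yt'.2 j = 1)) = yt' := by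
        refine Prod.ext ?_ ?_
        · funext e
          rcases h01y e with h | h <;> simp [hφ, h]
        · funext j
          rcases h01t j with h | h <;> simp [hφ, h]
      first
      | exact Finset.mem_filter.2 ⟨Finset.mem_univ _, by rw [hφf]; exact hyt'Q⟩
      | · rw [hφf]; exact hcost
    }
  have hSne : S.Nonempty := by
    obtain ⟨zt, hzt⟩ := hne
    obtain ⟨f, hf, _⟩ := key zt hzt
    exact ⟨f, hf⟩
  obtain ⟨f₀, hf₀S, hf₀min⟩ :=
    Finset.exists_min_image S (fun f => ∑ j : Fin m, (c j : ℝ) * (φ f).2 j) hSne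
  have hf₀Q : φ f₀ ∈ Qset ℓ ρ := (Finset.mem_filter.1 hf₀S).2
  refine ⟨φ f₀, hf₀Q, ?_, ?_, ?_⟩
  · intro e; by_cases h : f₀.1 e <;> simp [hφ, h]
  · intro j; by_cases h : f₀.2 j <;> simp [hφ, h]
  · intro zt hzt
    obtain ⟨f, hfS, hfle⟩ := key zt hzt
    exact (hf₀min f hfS).trans hfle

/-- LP lower bound via minimum-cost matching: if `Q` is nonempty then the LP
`min ∑_j c_j t_j` over `Q` has a 0-1 optimal solution, and its value is a lower bound on
`∑_j c_j t_j` over `P(w)` for every 0-1 matrix `w` (so `c*_LP ≥ c*_mat`). -/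
theorem LP_lowerBound_via_matching {n m : ℕ} (r : ℕ) {V E : Type*} [Fintype V] [Fintype E]
    [DecidableEq V] (ℓ : E → Fin n) (ρ : E → V ⊕ Fin m)
    (hinj : Function.Injective fun e : E => (ℓ e, ρ e))
    (c : Fin m → ℚ) (hc : ∀ j, 0 ≤ c j)
    (hne : (Qset ℓ ρ).Nonempty) :
    ∃ yt ∈ Qset ℓ ρ,
      (∀ e : E, yt.1 e = 0 ∨ yt.1 e = 1) ∧ (∀ j : Fin m, yt.2 j = 0 ∨ yt.2 j = 1) ∧
      (∀ zt ∈ Qset ℓ ρ, ∑ j : Fin m, (c j : ℝ) * yt.2 j ≤ ∑ j : Fin m, (c j : ℝ) * zt.2 j) ∧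
      ∀ w : Matrix (Fin r) (Fin m) ℝ, (∀ i j, w i j = 0 ∨ w i j = 1) →
        ∀ zt ∈ Pw ℓ ρ w, ∑ j : Fin m, (c j : ℝ) * yt.2 j ≤ ∑ j : Fin m, (c j : ℝ) * zt.2 j := by
  classical
  obtain ⟨yt, hytQ, h01y, h01t, hmin⟩ := LP_lowerBound_via_matching' r ℓ ρ hinj c hc hne
  refine ⟨yt, hytQ, h01y, h01t, hmin, ?_⟩
  intro w _ zt hzt
  obtain ⟨h1, h2, _, h4, h5, h6⟩ := hzt
  exact hmin zt ⟨h1, h2, h4, h5, h6⟩
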